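/- Let H be a real vector space with two inner products B and L. Fix m > 0 and a third quantity: suppose for each k there is an inner product B_k on H with B_k ≥ B in the sense that R_m(w) ≤ R_k(w) := B_k[w,w]/‖w‖_L² for all nonzero w, where R_m(w) := ‖w‖_B²/‖w‖_L², and suppose R_m(u_k) = R_k(u_k). If u_{k+1} is nonzero and satisfies B_k[u_{k+1}, φ] = R_m(u_k)⟨u_k, φ⟩_L for all φ ∈ H, then R_m(u_{k+1}) ‖u_{k+1}‖_L ≤ R_m(u_k) ‖u_k‖_L. -/

import Mathlib

/-- Monotonicity R_m(u_{k+1})‖u_{k+1}‖_L ≤ R_m(u_k)‖u_k‖_L for the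
optimal-insulation iteration, abstractly: B is the nonlinear form, Bk the
Robin form at step k, with R_m ≤ R_k and R_m(u) = R_k(u). -/
theorem stmt_15 {V : Type*} [AddCommGroup V] [Module ℝ V]
    (B Bk L : LinearMap.BilinForm ℝ V)
    (hBsymm : ∀ x y, B x y = B y x) (hBksymm : ∀ x y, Bk x y = Bk y x)
    (hLsymm : ∀ x y, L x y = L y x)
    (hBpos : ∀ x, x ≠ 0 → 0 < B x x) (hBkpos : ∀ x, x ≠ 0 → 0 < Bk x x)
    (hLpos : ∀ x, x ≠ 0 → 0 < L x x)
    (m : ℝ) (hm : 0 < m)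
    (hle : ∀ w : V, w ≠ 0 → B w w / L w w ≤ Bk w w / L w w)
    (u v : V) (hu : u ≠ 0) (hv : v ≠ 0)
    (heq : B u u / L u u = Bk u u / L u u)
    (hiter : ∀ φ : V, Bk v φ = (B u u / L u u) * L u φ) :
    (B v v / L v v) * Real.sqrt (L v v) ≤
      (B u u / L u u) * Real.sqrt (L u u) := by
  set a := L u u with ha
  set b := L u v with hb
  set c := L v v with hc
  have hauu : 0 < a := hLpos u hu
  have hcvv : 0 < c := hLpos v hv
  have hlam : 0 < B u u / a := div_pos (hBpos u hu) hauu
  -- Cauchy-Schwarz for L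
  have hnn : ∀ t : ℝ, 0 ≤ L (u - t • v) (u - t • v) := by
    intro t
    by_cases h : u - t • v = 0
    · rw [h]; simp
    · exact (hLpos _ h).le
  have hexp : ∀ t : ℝ, L (u - t • v) (u - t • v) = a - 2 * t * b + t ^ 2 * c := by
    intro t
    have hsymm := hLsymm v u
    simp only [map_sub, map_smul, LinearMap.sub_apply, LinearMap.smul_apply, smul_eq_mul,
      hsymm, ← hb, ← ha, ← hc]
    ring
  have hcs : b ^ 2 ≤ a * c := by
    have h0 := hnn (b / c)
    rw [hexp (b / c)] at h0
    have h5 : a - 2 * (b / c) * b + (b / c) ^ 2 * c = a - b ^ 2 / c := by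
      field_simp; ring
    rw [h5, sub_nonneg, div_le_iff₀ hcvv] at h0
    linarith
  have hcsq : Real.sqrt c * Real.sqrt c = c := Real.mul_self_sqrt hcvv.le
  have hasq : Real.sqrt a * Real.sqrt a = a := Real.mul_self_sqrt hauu.le
  have hsa0 : 0 < Real.sqrt a := Real.sqrt_pos.mpr hauu
  have hsc0 : 0 < Real.sqrt c := Real.sqrt_pos.mpr hcvv
  have hbsc : b ≤ Real.sqrt a * Real.sqrt c := by
    nlinarith [sq_nonneg (b - Real.sqrt a * Real.sqrt c),
      sq_nonneg (b + Real.sqrt a * Real.sqrt c), mul_pos hsa0 hsc0]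
  have hBvv : B v v ≤ Bk v v := by
    have h6 := hle v hv
    rw [div_le_div_iff_of_pos_right hcvv] at h6
    exact h6
  have h4 : B v v ≤ (B u u / a) * b := (hiter v) ▸ hBvv
  have h3 : B v v / c * Real.sqrt c = B v v / Real.sqrt c := by
    rw [← hcsq]; field_simp
    rw [Real.sqrt_sq hsc0.le]
  rw [h3, div_le_iff₀ hsc0]
  calc B v v ≤ (B u u / a) * b := h4
    _ ≤ (B u u / a) * (Real.sqrt a * Real.sqrt c) :=
        mul_le_mul_of_nonneg_left hbsc hlam.le
    _ = B u u / a * Real.sqrt a * Real.sqrt c := by ring
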